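/- Let A, A', B, B' be categories and let U : A ⥤ B, V : B ⥤ B', L : A ⥤ A', G : A' ⥤ B' be functors together with a natural isomorphism G ∘ L ≅ V ∘ U. Suppose that A' has coequalizers, that U preserves coequalizers of parallel pairs, that V preserves coequalizers of parallel pairs, and that G preserves coequalizers of parallel pairs and reflects isomorphisms. Then L preserves coequalizers of parallel pairs. -/
import Mathlib


open CategoryTheory CategoryTheory.Limits

universe v₁ v₂ v₃ v₄ u₁ u₂ u₃ u₄

/-- If `G ∘ L ≅ V ∘ U`, `A'` has coequalizers, `U`, `V` preserve coequalizers of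
parallel pairs, and `G` preserves coequalizers of parallel pairs and reflects
isomorphisms, then `L` preserves coequalizers of parallel pairs. -/
theorem preservesCoequalizers_of_square
    {A : Type u₁} [Category.{v₁} A] {A' : Type u₂} [Category.{v₂} A']
    {B : Type u₃} [Category.{v₃} B] {B' : Type u₄} [Category.{v₄} B']
    (U : A ⥤ B) (V : B ⥤ B') (L : A ⥤ A') (G : A' ⥤ B')
    (iso : L ⋙ G ≅ U ⋙ V)
    [HasCoequalizers A']
    [PreservesColimitsOfShape WalkingParallelPair U]
    [PreservesColimitsOfShape WalkingParallelPair V]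
    [PreservesColimitsOfShape WalkingParallelPair G]
    (hrefl : ∀ {X Y : A'} (f : X ⟶ Y), IsIso (G.map f) → IsIso f) :
    PreservesColimitsOfShape WalkingParallelPair L := by
  have : G.ReflectsIsomorphisms := ⟨fun f hf => hrefl f hf⟩
  have : PreservesColimitsOfShape WalkingParallelPair (L ⋙ G) :=
    preservesColimitsOfShape_of_natIso iso.symm
  have : ReflectsColimitsOfShape WalkingParallelPair G :=
    reflectsColimitsOfShape_of_reflectsIsomorphisms
  exact preservesColimitsOfShape_of_reflects_of_preserves L G
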